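/- arXiv:math/0011258 — 2 statements merged into one kernel-verified Lean document; each statement's English description precedes it below -/
import Mathlib

section
/- Let n ≥ 2 and let f₁, …, fₙ : Δ → ℂ be holomorphic functions on a connected open set Δ ⊆ ℂ, with f₁ nonconstant. Assume that for no nonempty open U ⊆ Δ is the image of z ↦ (1, f₁(z), …, fₙ(z)) contained in the common zero locus of n−1 independent real linear forms (i.e., the curve is not locally contained in a projective line defined over ℝ). Then the set {z ∈ Δ : there exists a nonzero q ∈ ℚ^{n+1} with q₀ + q₁f₁(z) + ⋯ + qₙfₙ(z) = 0} is dense in Δ. -/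
open Metric Module

/-- Linear algebra: the kernel of the real-linear map `a ↦ ∑ aᵢ vᵢ` into `ℂ`
has dimension at least `n - 1`. -/
lemma aux_ker_finrank (n : ℕ) (v : Fin (n + 1) → ℂ) :
    ∃ W : Submodule ℝ (Fin (n + 1) → ℝ),
      (∀ a ∈ W, (∑ i, (a i : ℂ) * v i) = 0) ∧ n - 1 ≤ finrank ℝ W := by
  set φ : (Fin (n + 1) → ℝ) →ₗ[ℝ] ℂ :=
    ∑ i : Fin (n + 1), (LinearMap.proj i : (Fin (n + 1) → ℝ) →ₗ[ℝ] ℝ).smulRight (v i) with hφ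
  have hφ_apply : ∀ a, φ a = ∑ i, (a i : ℂ) * v i := by
    intro a
    simp [hφ, LinearMap.sum_apply, Complex.real_smul]
  refine ⟨LinearMap.ker φ, fun a ha => by rw [← hφ_apply]; exact ha, ?_⟩
  have h1 : finrank ℝ (Fin (n + 1) → ℝ) = n + 1 := by simp
  have h2 : finrank ℝ (LinearMap.range φ) ≤ 2 := by
    have := Submodule.finrank_le (LinearMap.range φ)
    rwa [Complex.finrank_real_complex] at this
  have h3 := LinearMap.finrank_range_add_finrank_ker φ
  omega

theorem rational_relations_dense (n : ℕ) (hn : 2 ≤ n)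
    (Δ : Set ℂ) (hΔ : IsOpen Δ) (hconn : IsConnected Δ)
    (f : Fin (n + 1) → ℂ → ℂ)
    (h0 : ∀ z ∈ Δ, f 0 z = 1)
    (hf : ∀ i, DifferentiableOn ℂ (f i) Δ)
    (hnc : ¬ ∃ c : ℂ, ∀ z ∈ Δ, f 1 z = c)
    (hnd : ¬ ∃ U : Set ℂ, IsOpen U ∧ U.Nonempty ∧ U ⊆ Δ ∧
      ∃ L : Fin (n - 1) → Fin (n + 1) → ℝ, LinearIndependent ℝ L ∧
        ∀ z ∈ U, ∀ j, (∑ i, (L j i : ℂ) * f i z) = 0) :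
    Δ ⊆ closure {z ∈ Δ | ∃ q : Fin (n + 1) → ℚ, q ≠ 0 ∧
      (∑ i, (q i : ℂ) * f i z) = 0} := by
  intro P hP
  rw [Metric.mem_closure_iff]
  intro ε hε
  -- the kernel subspace at P
  obtain ⟨W, hWzero, hWrank⟩ := aux_ker_finrank n (fun i => f i P)
  -- Step 1: find real coefficients a vanishing at P whose combination is not ≡ 0 on Δ
  by_cases hcase : ∀ a : Fin (n + 1) → ℝ, a ∈ W → ∀ z ∈ Δ, (∑ i, (a i : ℂ) * f i z) = 0
  · -- contradiction with non-degeneracy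
    exfalso
    apply hnd
    have hle : n - 1 ≤ finrank ℝ W := hWrank
    let b := Module.finBasis ℝ W
    refine ⟨Δ, hΔ, hconn.nonempty, subset_rfl,
      fun j i => (b (Fin.castLE hle j) : Fin (n + 1) → ℝ) i, ?_, ?_⟩
    · have h1 : LinearIndependent ℝ (fun j : Fin (n - 1) => b (Fin.castLE hle j)) :=
        b.linearIndependent.comp _ (Fin.castLE_injective hle)
      have h2 := h1.map' W.subtype W.ker_subtype
      exact h2
    · intro z hz j
      exact hcase _ (b (Fin.castLE hle j)).2 z hz
  · push_neg at hcase
    obtain ⟨a, haW, z₀, hz₀Δ, hz₀⟩ := hcase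
    have ha : a ≠ 0 := by
      rintro rfl
      simp at hz₀
    set g : ℂ → ℂ := fun z => ∑ i, (a i : ℂ) * f i z with hg
    have hgP : g P = 0 := hWzero a haW
    have hg_diff : DifferentiableOn ℂ g Δ :=
      DifferentiableOn.fun_sum fun i _ => (hf i).const_mul _
    have hg_an : AnalyticOnNhd ℂ g Δ := hg_diff.analyticOnNhd hΔ
    -- g has an isolated zero at P
    have hiso : ∀ᶠ z in nhdsWithin P {P}ᶜ, g z ≠ 0 := by
      rcases (hg_an P hP).eventually_eq_zero_or_eventually_ne_zero with h | h
      · exfalso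
        exact hz₀ (AnalyticOnNhd.eqOn_zero_of_preconnected_of_eventuallyEq_zero
          hg_an hconn.isPreconnected hP h hz₀Δ)
      · exact h
    rw [eventually_nhdsWithin_iff] at hiso
    rw [Metric.eventually_nhds_iff] at hiso
    obtain ⟨δ₁, hδ₁, hball₁⟩ := hiso
    obtain ⟨δ₂, hδ₂, hball₂⟩ := Metric.isOpen_iff.mp hΔ P hP
    -- choose the radius r
    set r : ℝ := min (min δ₁ δ₂) ε / 2 with hr_def
    have hr : 0 < r := by positivity
    have hrδ₁ : r < δ₁ := by
      have : r ≤ min δ₁ δ₂ / 2 := by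
        apply div_le_div_of_nonneg_right _ (by norm_num)
        exact min_le_left _ _
      calc r ≤ min δ₁ δ₂ / 2 := this
        _ < min δ₁ δ₂ := by have := lt_min hδ₁ hδ₂; linarith
        _ ≤ δ₁ := min_le_left _ _
    have hrδ₂ : r < δ₂ := by
      have : r ≤ min δ₁ δ₂ / 2 := by
        apply div_le_div_of_nonneg_right _ (by norm_num)
        exact min_le_left _ _
      calc r ≤ min δ₁ δ₂ / 2 := this
        _ < min δ₁ δ₂ := by have := lt_min hδ₁ hδ₂; linarith
        _ ≤ δ₂ := min_le_right _ _
    have hrε : r < ε := by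
      have : r ≤ ε / 2 := by
        apply div_le_div_of_nonneg_right _ (by norm_num)
        exact min_le_right _ _
      linarith
    have hsubΔ : closedBall P r ⊆ Δ := fun z hz =>
      hball₂ (lt_of_le_of_lt (mem_closedBall.mp hz) hrδ₂)
    have hne_ball : ∀ z ∈ closedBall P r, z ≠ P → g z ≠ 0 := fun z hz hzP =>
      hball₁ (lt_of_le_of_lt (mem_closedBall.mp hz) hrδ₁) hzP
    -- minimum of ‖g‖ on the sphere
    have hsph_ne : (sphere P r).Nonempty := NormedSpace.sphere_nonempty.mpr hr.le
    have hsph_sub : sphere P r ⊆ closedBall P r := sphere_subset_closedBall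
    have hg_cont : ContinuousOn g (closedBall P r) :=
      hg_diff.continuousOn.mono hsubΔ
    obtain ⟨w, hw, hwmin⟩ := (isCompact_sphere P r).exists_isMinOn hsph_ne
      ((hg_cont.mono hsph_sub).norm)
    set m : ℝ := ‖g w‖ with hm_def
    have hwP : w ≠ P := by
      intro hEq
      have hd := mem_sphere.mp hw
      rw [hEq, dist_self] at hd
      exact hr.ne hd
    have hm : 0 < m := by
      have := hne_ball w (hsph_sub hw) hwP
      simpa [hm_def, norm_pos_iff] using this
    have hmin : ∀ z ∈ sphere P r, m ≤ ‖g z‖ := fun z hz => hwmin hz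
    -- uniform bound M on the fᵢ over the closed ball
    have hbound : ∃ M : ℝ, 0 < M ∧ ∀ i, ∀ z ∈ closedBall P r, ‖f i z‖ ≤ M := by
      have hC : ∀ i : Fin (n + 1), ∃ C, ∀ z ∈ closedBall P r, ‖f i z‖ ≤ C := fun i =>
        (isCompact_closedBall P r).exists_bound_of_continuousOn
          ((hf i).continuousOn.mono hsubΔ)
      choose C hCb using hC
      refine ⟨1 + ∑ j, |C j|, by positivity, fun i z hz => ?_⟩
      calc ‖f i z‖ ≤ C i := hCb i z hz
        _ ≤ |C i| := le_abs_self _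
        _ ≤ ∑ j, |C j| := Finset.single_le_sum (fun j _ => abs_nonneg (C j))
            (Finset.mem_univ i)
        _ ≤ 1 + ∑ j, |C j| := by linarith
    obtain ⟨M, hM, hMb⟩ := hbound
    -- choose rational approximations
    set δ : ℝ := m / (3 * (n + 1) * M) with hδ_def
    have hδ : 0 < δ := by positivity
    have hq : ∀ i : Fin (n + 1), ∃ q : ℚ,
        |a i - (q : ℝ)| < δ ∧ (a i ≠ 0 → (q : ℝ) ≠ 0) := by
      intro i
      by_cases hai : a i = 0
      · obtain ⟨q, hq⟩ := exists_rat_near (a i) hδ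
        exact ⟨q, hq, fun h => absurd hai h⟩
      · obtain ⟨q, hq⟩ := exists_rat_near (a i) (lt_min hδ (abs_pos.mpr hai))
        refine ⟨q, (hq.trans_le (min_le_left _ _)), fun _ hq0 => ?_⟩
        rw [hq0, sub_zero] at hq
        exact absurd (hq.trans_le (min_le_right _ _)) (lt_irrefl _)
    choose q hq1 hq2 using hq
    have hqne : q ≠ 0 := by
      obtain ⟨i, hi⟩ := Function.ne_iff.mp ha
      intro h
      have : (q i : ℝ) ≠ 0 := hq2 i hi
      rw [h] at this
      simp at this
    set h : ℂ → ℂ := fun z => ∑ i, (q i : ℂ) * f i z with hh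
    -- bound on ‖h - g‖ on the closed ball
    have hdiff_bound : ∀ z ∈ closedBall P r, ‖h z - g z‖ ≤ m / 3 := by
      intro z hz
      have : h z - g z = ∑ i, ((q i : ℂ) - (a i : ℂ)) * f i z := by
        rw [hh, hg, ← Finset.sum_sub_distrib]
        congr 1; ext i; ring
      rw [this]
      calc ‖∑ i, ((q i : ℂ) - (a i : ℂ)) * f i z‖
          ≤ ∑ i, ‖((q i : ℂ) - (a i : ℂ)) * f i z‖ := norm_sum_le _ _
        _ ≤ ∑ _i : Fin (n + 1), δ * M := by
            apply Finset.sum_le_sum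
            intro i _
            rw [norm_mul]
            apply mul_le_mul _ (hMb i z hz) (norm_nonneg _) hδ.le
            have : ((q i : ℂ) - (a i : ℂ)) = (((q i : ℝ) - a i : ℝ) : ℂ) := by
              push_cast; ring
            rw [this, Complex.norm_real, Real.norm_eq_abs, abs_sub_comm]
            exact (hq1 i).le
        _ = (n + 1) * (δ * M) := by
            rw [Finset.sum_const, Finset.card_univ, Fintype.card_fin]
            push_cast; ring
        _ = m / 3 := by
            rw [hδ_def]
            field_simp
    -- h must vanish somewhere in the closed ball
    have hzero : ∃ z ∈ closedBall P r, h z = 0 := by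
      by_contra hcon
      push_neg at hcon
      have hh_diff : DifferentiableOn ℂ h Δ :=
        DifferentiableOn.fun_sum fun i _ => (hf i).const_mul _
      have hcl : closure (ball P r) = closedBall P r := closure_ball P hr.ne'
      have hdc : DiffContOnCl ℂ (fun z => (h z)⁻¹) (ball P r) := by
        constructor
        · exact ((hh_diff.mono (ball_subset_closedBall.trans hsubΔ)).inv
            fun z hz => hcon z (ball_subset_closedBall hz))
        · rw [hcl]
          exact ((hh_diff.continuousOn.mono hsubΔ).inv₀ hcon)
      have hfr : ∀ z ∈ frontier (ball P r), ‖(h z)⁻¹‖ ≤ (2 * m / 3)⁻¹ := by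
        intro z hz
        rw [frontier_ball P hr.ne'] at hz
        have h1 : 2 * m / 3 ≤ ‖h z‖ := by
          have hg_lb := hmin z hz
          have hd := hdiff_bound z (hsph_sub hz)
          have h1 := norm_sub_norm_le (g z) (h z)
          rw [norm_sub_rev] at h1
          linarith
        rw [norm_inv]
        apply inv_anti₀ (by linarith) h1
      have hPn := Complex.norm_le_of_forall_mem_frontier_norm_le isBounded_ball hdc hfr
        (by rw [hcl]; exact mem_closedBall_self hr.le)
      have hhP : ‖h P‖ ≤ m / 3 := by
        have := hdiff_bound P (mem_closedBall_self hr.le)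
        rwa [hgP, sub_zero] at this
      have hhP_pos : h P ≠ 0 := hcon P (mem_closedBall_self hr.le)
      have h2 : 2 * m / 3 ≤ ‖h P‖ := by
        rw [norm_inv] at hPn
        have hm23 : 0 < 2 * m / 3 := by positivity
        have hhPn : 0 < ‖h P‖ := norm_pos_iff.mpr hhP_pos
        rw [inv_le_inv₀ hhPn hm23] at hPn
        exact hPn
      linarith
    obtain ⟨z, hzball, hz0⟩ := hzero
    refine ⟨z, ⟨hsubΔ hzball, q, hqne, hz0⟩, ?_⟩
    rw [dist_comm]
    exact lt_of_le_of_lt (mem_closedBall.mp hzball) hrε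
end

section
/- Let τ ∈ ℍ and let φ be a holomorphic function defined on a neighborhood of τ with φ(τ) ∈ ℍ. Then there exists a sequence τ_k ∈ ℍ \ {τ} with τ_k → τ such that for each k there exist rational numbers a, b, c, d with ad − bc > 0 and φ(τ_k) = (aτ_k + b)/(cτ_k + d). -/
open Metric Set

/-- Key step: for each `k` we find a point `z` within `1/(k+1)` of `τ`, distinct from `τ`,
in the upper half plane, where `φ z` is a rational Möbius image of `z`. -/
lemma keyStep (τ : ℂ) (hτ : 0 < τ.im) (U : Set ℂ) (hU : IsOpen U) (hτU : τ ∈ U)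
    (φ : ℂ → ℂ) (hφ : DifferentiableOn ℂ φ U) (hφτ : 0 < (φ τ).im) (k : ℕ) :
    ∃ z : ℂ, dist z τ ≤ 1 / (k + 1) ∧ z ≠ τ ∧ 0 < z.im ∧
      ∃ a b c d : ℚ, 0 < a * d - b * c ∧
        φ z = ((a : ℂ) * z + b) / ((c : ℂ) * z + d) := by
  have hτim : τ.im ≠ 0 := ne_of_gt hτ
  -- strict derivative of φ at τ
  obtain ⟨pw, hpw⟩ : AnalyticAt ℂ φ τ := (hφ.analyticOnNhd hU) τ hτU
  obtain ⟨φ', hφ'⟩ : ∃ g, HasStrictDerivAt φ g τ := ⟨_, hpw.hasStrictDerivAt⟩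
  -- choose a good rational shift dq
  have hgood : ∃ dq : ℚ,
      φ' * (τ + (dq : ℂ)) + φ τ ≠ (((φ τ * (τ + (dq : ℂ))).im / τ.im : ℝ) : ℂ) := by
    by_contra h
    push_neg at h
    have h0 := h 0
    have h1 := h 1
    simp only [Rat.cast_zero, Rat.cast_one, add_zero] at h0 h1
    have him1 : (φ τ * (τ + 1)).im = (φ τ * τ).im + (φ τ).im := by
      rw [mul_add, mul_one, Complex.add_im]
    have hsub : φ' = (((φ τ).im / τ.im : ℝ) : ℂ) := by
      have e : φ' = ((((φ τ * τ).im + (φ τ).im) / τ.im : ℝ) : ℂ) -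
          (((φ τ * τ).im / τ.im : ℝ) : ℂ) := by
        rw [← him1, ← h1, ← h0]; ring
      rw [e, ← Complex.ofReal_sub]
      congr 1
      ring
    -- take imaginary part of h0
    have e0 := congrArg Complex.im h0
    rw [hsub] at e0
    simp only [Complex.add_im, Complex.im_ofReal_mul, Complex.ofReal_im] at e0
    have : (φ τ).im / τ.im * τ.im = (φ τ).im := by field_simp
    rw [this] at e0
    have : (φ τ).im = 0 := by linarith
    exact absurd this (ne_of_gt hφτ)
  obtain ⟨dq, hA⟩ := hgood
  set H : ℂ → ℂ := fun z => φ z * (z + (dq : ℂ)) with hHdef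
  set A : ℂ := φ' * (τ + (dq : ℂ)) + φ τ with hAdef
  have hH : HasStrictDerivAt H A τ := by
    have := hφ'.mul ((hasStrictDerivAt_id τ).add_const ((dq : ℂ)))
    simp only [mul_one, id_eq, id] at this
    exact this
  set p₀ : ℝ := (φ τ * (τ + (dq : ℂ))).im / τ.im with hp₀def
  have hHτim : (H τ).im = p₀ * τ.im := by
    rw [hHdef]; simp only [hp₀def]; field_simp
  set m : ℝ := ‖A - (p₀ : ℂ)‖ with hmdef
  have hm : 0 < m := by
    rw [hmdef, norm_pos_iff, sub_ne_zero]; exact hA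
  -- approximation constant
  set c : NNReal := ‖A - (p₀ : ℂ)‖₊ / 4 with hcdef
  have hcm : (c : ℝ) = m / 4 := by
    rw [hcdef, hmdef]; push_cast [coe_nnnorm]; ring
  have hcpos : 0 < c := by
    rw [hcdef]
    apply div_pos _ (by norm_num)
    rw [pos_iff_ne_zero, nnnorm_ne_zero_iff, sub_ne_zero]
    exact hA
  have hFD : HasStrictFDerivAt H (ContinuousLinearMap.smulRight
      (1 : ℂ →L[ℂ] ℂ) A) τ := hH
  obtain ⟨s, hs_nhds, hsApprox⟩ := hFD.approximates_deriv_on_nhds (Or.inr hcpos)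
  -- open set where z ∈ U, Im z > 0, Im (φ z) > 0
  have himopen : IsOpen {w : ℂ | 0 < w.im} := isOpen_lt continuous_const Complex.continuous_im
  have hO1 : IsOpen (U ∩ φ ⁻¹' {w : ℂ | 0 < w.im}) :=
    hφ.continuousOn.isOpen_inter_preimage hU himopen
  set O : Set ℂ := (U ∩ φ ⁻¹' {w : ℂ | 0 < w.im}) ∩ {w : ℂ | 0 < w.im} with hOdef
  have hOopen : IsOpen O := hO1.inter himopen
  have hτO : τ ∈ O := ⟨⟨hτU, hφτ⟩, hτ⟩
  have hsO : s ∩ O ∈ nhds τ := Filter.inter_mem hs_nhds (hOopen.mem_nhds hτO)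
  obtain ⟨ε₁, hε₁, hball⟩ := Metric.mem_nhds_iff.1 hsO
  set ε : ℝ := min (ε₁ / 2) (1 / (k + 1)) with hεdef
  have hεpos : 0 < ε := by
    apply lt_min (by linarith)
    positivity
  have hεk : ε ≤ 1 / (k + 1) := min_le_right _ _
  have hεsub : closedBall τ ε ⊆ s ∩ O := by
    refine Subset.trans ?_ hball
    refine Subset.trans (closedBall_subset_closedBall (min_le_left _ _)) ?_
    exact Metric.closedBall_subset_ball (by linarith)
  -- choose rational p slightly above p₀
  set δ : ℝ := min (m / 2) (m / 4 * ε / (2 * τ.im)) with hδdef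
  have hδpos : 0 < δ := by
    apply lt_min (by linarith)
    positivity
  obtain ⟨p, hp1, hp2⟩ := exists_rat_btwn (show p₀ < p₀ + δ by linarith)
  set u : ℂ := A - ((p : ℝ) : ℂ) with hudef
  have hppdist : ‖(((p : ℝ) : ℂ)) - ((p₀ : ℝ) : ℂ)‖ < δ := by
    rw [← Complex.ofReal_sub, Complex.norm_real, Real.norm_eq_abs,
      abs_of_pos (by linarith)]
    linarith
  have hu_lb : m / 2 ≤ ‖u‖ := by
    have htri : ‖A - (p₀ : ℂ)‖ ≤ ‖u‖ + ‖(((p : ℝ) : ℂ)) - ((p₀ : ℝ) : ℂ)‖ := by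
      have : A - (p₀ : ℂ) = u + ((((p : ℝ) : ℂ)) - ((p₀ : ℝ) : ℂ)) := by
        rw [hudef]; ring
      rw [this]; exact norm_add_le _ _
    have hδm : δ ≤ m / 2 := min_le_left _ _
    rw [← hmdef] at htri
    linarith
  have hu0 : u ≠ 0 := by
    intro h
    rw [h, norm_zero] at hu_lb
    linarith
  -- the function h_p and its linear approximation
  set hp : ℂ → ℂ := fun z => H z - ((p : ℝ) : ℂ) * z with hhpdef
  set D : ℂ →L[ℂ] ℂ := ContinuousLinearMap.smulRight (1 : ℂ →L[ℂ] ℂ) u with hDdef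
  have hDapp : ∀ v : ℂ, D v = v * u := by
    intro v
    simp [hDdef, smul_eq_mul]
  have happrox : ApproximatesLinearOn hp D (closedBall τ ε) c := by
    intro x hx y hy
    have h1 := hsApprox x (hεsub hx).1 y (hεsub hy).1
    have e : hp x - hp y - D (x - y) =
        H x - H y - (ContinuousLinearMap.smulRight (1 : ℂ →L[ℂ] ℂ) A) (x - y) := by
      rw [hDapp]
      simp only [ContinuousLinearMap.smulRight_apply, ContinuousLinearMap.one_apply,
        smul_eq_mul, hhpdef, hudef]
      ring
    rw [e]
    exact h1
  -- nonlinear right inverse of D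
  set Dsymm : D.NonlinearRightInverse :=
    { toFun := fun y => u⁻¹ * y
      nnnorm := ‖u‖₊⁻¹
      bound' := by
        intro y
        rw [norm_mul, norm_inv]
        push_cast [coe_nnnorm]
        exact le_refl _
      right_inv' := by
        intro y
        rw [hDapp]
        field_simp } with hDsymmdef
  have hDsnn : ((Dsymm.nnnorm : ℝ))⁻¹ = ‖u‖ := by
    rw [hDsymmdef]
    push_cast [coe_nnnorm]
    rw [inv_inv]
  have hsurj := happrox.surjOn_closedBall_of_nonlinearRightInverse Dsymm
    (le_of_lt hεpos) (subset_refl _)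
  rw [hDsnn] at hsurj
  -- the target: a rational point q near hp τ
  obtain ⟨q, hq⟩ := exists_rat_near ((hp τ).re) (show (0:ℝ) < m / 4 * ε / 2 by positivity)
  set w : ℂ := ((q : ℝ) : ℂ) with hwdef
  have hhpτim : (hp τ).im = (p₀ - p) * τ.im := by
    rw [hhpdef]
    simp only [Complex.sub_im, Complex.im_ofReal_mul, hHτim]
    ring
  have hwdist : dist w (hp τ) ≤ m / 4 * ε := by
    rw [Complex.dist_eq]
    refine le_trans (Complex.norm_le_abs_re_add_abs_im _) ?_
    have hre : (w - hp τ).re = (q : ℝ) - (hp τ).re := by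
      simp [hwdef]
    have him : (w - hp τ).im = -((hp τ).im) := by
      simp [hwdef]
    rw [hre, him, hhpτim]
    have h1 : |(q : ℝ) - (hp τ).re| < m / 4 * ε / 2 := by
      rw [abs_sub_comm]; exact hq
    have hδ2 : δ ≤ m / 4 * ε / (2 * τ.im) := min_le_right _ _
    have h2 : |-(((p₀ - p) * τ.im))| < m / 4 * ε / 2 := by
      rw [abs_neg, abs_of_nonpos (by nlinarith),
        show -((p₀ - (p : ℝ)) * τ.im) = ((p : ℝ) - p₀) * τ.im by ring]
      have : ((p : ℝ) - p₀) * τ.im < δ * τ.im := by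
        apply mul_lt_mul_of_pos_right (by linarith) hτ
      have hδτ : δ * τ.im ≤ m / 4 * ε / 2 := by
        calc δ * τ.im ≤ m / 4 * ε / (2 * τ.im) * τ.im := by
              apply mul_le_mul_of_nonneg_right hδ2 (le_of_lt hτ)
          _ = m / 4 * ε / 2 := by field_simp
      linarith
    linarith
  have hwmem : w ∈ closedBall (hp τ) ((‖u‖ - (c : ℝ)) * ε) := by
    rw [mem_closedBall]
    refine le_trans hwdist ?_
    rw [hcm]
    have : m / 4 ≤ ‖u‖ - m / 4 := by linarith
    nlinarith
  obtain ⟨z, hzball, hzeq⟩ := hsurj hwmem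
  have hzO : z ∈ O := (hεsub hzball).2
  have hzU : z ∈ U := hzO.1.1
  have hzim : 0 < z.im := hzO.2
  have hφzim : 0 < (φ z).im := hzO.1.2
  -- z ≠ τ
  have hzne : z ≠ τ := by
    intro h
    rw [h] at hzeq
    have := congrArg Complex.im hzeq
    rw [hhpτim] at this
    simp only [hwdef, Complex.ofReal_im] at this
    have hlt : (p₀ - (p : ℝ)) * τ.im < 0 := by
      apply mul_neg_of_neg_of_pos (by linarith) hτ
    rw [this] at hlt
    exact lt_irrefl 0 hlt
  refine ⟨z, ?_, hzne, hzim, p, q, 1, dq, ?_, ?_⟩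
  · exact le_trans (mem_closedBall.1 hzball) hεk
  · -- determinant condition
    have hzd : z + ((dq : ℝ) : ℂ) ≠ 0 := by
      intro h
      have := congrArg Complex.im h
      simp only [Complex.add_im, Complex.ofReal_im, Complex.zero_im, add_zero] at this
      exact absurd this (ne_of_gt hzim)
    -- the equation
    have heq : φ z * (z + ((dq : ℝ) : ℂ)) - ((p : ℝ) : ℂ) * z = ((q : ℝ) : ℂ) := by
      have : hp z = w := hzeq
      rw [hhpdef, hHdef] at this
      push_cast at this ⊢
      exact this
    have hinv : (z + ((dq : ℝ) : ℂ))⁻¹ * (z + ((dq : ℝ) : ℂ)) = 1 := inv_mul_cancel₀ hzd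
    have hform : φ z = (((p : ℝ) : ℂ)) + (((q : ℝ) - (p : ℝ) * (dq : ℝ) : ℝ) : ℂ) *
        (z + ((dq : ℝ) : ℂ))⁻¹ := by
      have hmul : ((((p : ℝ) : ℂ)) + (((q : ℝ) - (p : ℝ) * (dq : ℝ) : ℝ) : ℂ) *
          (z + ((dq : ℝ) : ℂ))⁻¹) * (z + ((dq : ℝ) : ℂ)) = φ z * (z + ((dq : ℝ) : ℂ)) := by
        have e1 : ((((p : ℝ) : ℂ)) + (((q : ℝ) - (p : ℝ) * (dq : ℝ) : ℝ) : ℂ) *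
            (z + ((dq : ℝ) : ℂ))⁻¹) * (z + ((dq : ℝ) : ℂ)) =
            (((p : ℝ) : ℂ)) * (z + ((dq : ℝ) : ℂ)) +
            (((q : ℝ) - (p : ℝ) * (dq : ℝ) : ℝ) : ℂ) *
            ((z + ((dq : ℝ) : ℂ))⁻¹ * (z + ((dq : ℝ) : ℂ))) := by ring
        rw [e1, hinv, mul_one]
        push_cast
        linear_combination -heq
      exact (mul_right_cancel₀ hzd hmul).symm
    have himeq : (φ z).im = ((q : ℝ) - (p : ℝ) * (dq : ℝ)) *
        (-(z.im) / Complex.normSq (z + ((dq : ℝ) : ℂ))) := by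
      rw [hform]
      simp only [Complex.add_im, Complex.ofReal_im, Complex.im_ofReal_mul, Complex.inv_im,
        Complex.add_im, Complex.ofReal_im, add_zero, zero_add]
    have hnsq : 0 < Complex.normSq (z + ((dq : ℝ) : ℂ)) := Complex.normSq_pos.2 hzd
    have hlt : (q : ℝ) - (p : ℝ) * (dq : ℝ) < 0 := by
      by_contra hge
      push_neg at hge
      have : (φ z).im ≤ 0 := by
        rw [himeq]
        apply mul_nonpos_of_nonneg_of_nonpos hge
        apply div_nonpos_of_nonpos_of_nonneg (by linarith) (le_of_lt hnsq)
      linarith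
    have : (0 : ℝ) < (p : ℝ) * (dq : ℝ) - (q : ℝ) * 1 := by linarith
    exact_mod_cast this
  · -- the Möbius formula
    have hzd : z + ((dq : ℝ) : ℂ) ≠ 0 := by
      intro h
      have := congrArg Complex.im h
      simp only [Complex.add_im, Complex.ofReal_im, Complex.zero_im, add_zero] at this
      exact absurd this (ne_of_gt hzim)
    have heq : φ z * (z + ((dq : ℝ) : ℂ)) - ((p : ℝ) : ℂ) * z = ((q : ℝ) : ℂ) := by
      have : hp z = w := hzeq
      rw [hhpdef, hHdef] at this
      push_cast at this ⊢
      exact this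
    rw [eq_div_iff]
    · push_cast
      linear_combination heq
    · push_cast
      rw [one_mul]
      exact_mod_cast hzd

theorem rational_equivalence_points_accumulate
    (τ : ℂ) (hτ : 0 < τ.im) (U : Set ℂ) (hU : IsOpen U) (hτU : τ ∈ U)
    (φ : ℂ → ℂ) (hφ : DifferentiableOn ℂ φ U) (hφτ : 0 < (φ τ).im) :
    ∃ t : ℕ → ℂ,
      (∀ k, t k ≠ τ ∧ 0 < (t k).im ∧
        ∃ a b c d : ℚ, 0 < a * d - b * c ∧
          φ (t k) = ((a : ℂ) * t k + b) / ((c : ℂ) * t k + d)) ∧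
      Filter.Tendsto t Filter.atTop (nhds τ) := by
  have key := fun k => keyStep τ hτ U hU hτU φ hφ hφτ k
  choose t ht1 ht2 ht3 ht4 using key
  refine ⟨t, fun k => ⟨ht2 k, ht3 k, ht4 k⟩, ?_⟩
  rw [tendsto_iff_dist_tendsto_zero]
  apply squeeze_zero (fun k => dist_nonneg) ht1
  exact tendsto_one_div_add_atTop_nhds_zero_nat
end
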